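/- With M = ℤ^{r+2} and the involution σ as below, assume that all the d_i are even. Then the r elements e_i − (d_i/2) e_{r+1} (1 ≤ i ≤ r) form a ℤ-basis of the kernel of σ + id. -/

import Mathlib

/-- With `M = ℤ × (Fin r → ℤ) × ℤ` and the involution `σ` as in
Statement 13, if all the `d_i` are even then the `r` elements
`e_i - (d_i/2) e_{r+1} = (0, Pi.single i 1, -(d_i/2))` (`1 ≤ i ≤ r`) form a
ℤ-basis of `ker(σ + id)`. -/
theorem stmt14 (r : ℕ) (hr : 1 ≤ r) (d : Fin r → ℤ) (hd : ∀ i, 0 < d i)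
    (hd2 : ∀ i, Even (d i))
    (σ : (ℤ × (Fin r → ℤ) × ℤ) →ₗ[ℤ] (ℤ × (Fin r → ℤ) × ℤ))
    (hσ : ∀ x : ℤ × (Fin r → ℤ) × ℤ,
      σ x = (x.1, fun i => x.1 - x.2.1 i,
             x.2.2 + (∑ i, d i * x.2.1 i) - ((∑ i, d i) / 2) * x.1)) :
    ∃ b : Module.Basis (Fin r) ℤ (LinearMap.ker (σ + LinearMap.id)),
      ∀ i : Fin r,
        (b i : ℤ × (Fin r → ℤ) × ℤ) = (0, Pi.single i 1, -(d i / 2)) := by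
  have hdd : ∀ i, 2 * (d i / 2) = d i := fun i => Int.two_mul_ediv_two_of_even (hd2 i)
  have hsum : ∀ w : Fin r → ℤ, (∑ i, d i * w i) = 2 * ∑ i, (d i / 2) * w i := by
    intro w
    rw [Finset.mul_sum]
    refine Finset.sum_congr rfl fun i _ => ?_
    rw [← mul_assoc, hdd]
  -- membership criterion
  have mem_iff : ∀ x : ℤ × (Fin r → ℤ) × ℤ,
      x ∈ LinearMap.ker (σ + LinearMap.id) ↔
        x.1 = 0 ∧ x.2.2 = -∑ i, (d i / 2) * x.2.1 i := by
    intro x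
    rw [LinearMap.mem_ker, LinearMap.add_apply, LinearMap.id_apply, hσ]
    constructor
    · intro h
      have h1 : x.1 + x.1 = 0 := congrArg Prod.fst h
      have hx1 : x.1 = 0 := by linarith
      have h3 : (x.2.2 + (∑ i, d i * x.2.1 i) - ((∑ i, d i) / 2) * x.1) + x.2.2 = 0 :=
        congrArg (fun y => y.2.2) h
      rw [hx1, mul_zero, sub_zero, hsum] at h3
      refine ⟨hx1, by linarith⟩
    · rintro ⟨h1, h2⟩
      have : (∑ i, d i * x.2.1 i) = 2 * ∑ i, (d i / 2) * x.2.1 i := hsum _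
      refine Prod.ext ?_ (Prod.ext ?_ ?_)
      · simpa using by linarith [h1] 
      · funext i
        show (x.1 - x.2.1 i) + x.2.1 i = 0
        simp [h1]
      · show (x.2.2 + (∑ i, d i * x.2.1 i) - ((∑ i, d i) / 2) * x.1) + x.2.2 = 0
        rw [h1, mul_zero, sub_zero, this, h2]; ring
  -- the linear map
  let f : (Fin r → ℤ) →ₗ[ℤ] (ℤ × (Fin r → ℤ) × ℤ) :=
    { toFun := fun w => (0, w, -∑ i, (d i / 2) * w i)
      map_add' := fun w v => by
        refine Prod.ext (by simp) (Prod.ext rfl ?_)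
        show -∑ i, (d i / 2) * (w i + v i) = _
        simp [mul_add, Finset.sum_add_distrib]; ring
      map_smul' := fun c w => by
        refine Prod.ext (by simp) (Prod.ext rfl ?_)
        show -∑ i, (d i / 2) * (c * w i) = _
        simp [Finset.mul_sum]; ring_nf
        refine Finset.sum_congr rfl fun i _ => by ring }
  have hmem : ∀ w, f w ∈ LinearMap.ker (σ + LinearMap.id) := fun w =>
    (mem_iff _).2 ⟨rfl, rfl⟩
  let g := f.codRestrict _ hmem
  have hinj : Function.Injective g := by
    intro w v h
    have h' : (g w : ℤ × (Fin r → ℤ) × ℤ) = g v := congrArg Subtype.val h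
    exact congrArg (fun y : ℤ × (Fin r → ℤ) × ℤ => y.2.1) h'
  have hsurj : Function.Surjective g := by
    rintro ⟨x, hx⟩
    obtain ⟨h1, h2⟩ := (mem_iff x).1 hx
    refine ⟨x.2.1, ?_⟩
    apply Subtype.ext
    show (0, x.2.1, -∑ i, (d i / 2) * x.2.1 i) = x
    exact Prod.ext h1.symm (Prod.ext rfl h2.symm)
  let e := LinearEquiv.ofBijective g ⟨hinj, hsurj⟩
  refine ⟨(Pi.basisFun ℤ (Fin r)).map e, fun i => ?_⟩
  have : ((Pi.basisFun ℤ (Fin r)).map e i : ℤ × (Fin r → ℤ) × ℤ)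
      = f (Pi.single i 1) := by
    rw [Module.Basis.map_apply]
    simp only [e, LinearEquiv.ofBijective_apply, Pi.basisFun_apply]
    rfl
  rw [this]
  show ((0, Pi.single i 1, -∑ j, (d j / 2) * (Pi.single i 1 : Fin r → ℤ) j) :
      ℤ × (Fin r → ℤ) × ℤ) = _
  refine Prod.ext rfl (Prod.ext rfl ?_)
  show -∑ j, (d j / 2) * (Pi.single i 1 : Fin r → ℤ) j = -(d i / 2)
  congr 1
  rw [Finset.sum_eq_single i]
  · simp
  · intro j _ hj; simp [Pi.single_eq_of_ne hj]
  · simp
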